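/- If f : ℝ → ℝ is a probability density on ℝ that is positive everywhere and log-concave (i.e., log f is concave), then f has at most exponential tails: there exist constants a > 0 and b ∈ ℝ such that f(s) ≤ exp(-a·|s| + b) for all s ∈ ℝ. -/

import Mathlib

open MeasureTheory Real

theorem logconcave_density_exponential_tails
    (f : ℝ → ℝ)
    (hmeas : Measurable f)
    (hnonneg : ∀ x, 0 ≤ f x)
    (hint : ∫ x, f x = 1)
    (hpos : ∀ x, 0 < f x)
    (hconc : ConcaveOn ℝ Set.univ (fun x => Real.log (f x))) :
    ∃ a > 0, ∃ b : ℝ, ∀ s : ℝ, f s ≤ Real.exp (-a * |s| + b) := by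
  set g : ℝ → ℝ := fun x => Real.log (f x) with hgdef
  -- f is integrable
  have hintg : Integrable f := by
    by_contra h
    rw [MeasureTheory.integral_undef h] at hint
    norm_num at hint
  have hfin : volume {x : ℝ | f 0 ≤ f x} < ⊤ := hintg.measure_ge_lt_top (hpos 0)
  -- a point to the right where f is smaller
  obtain ⟨p, hp0, hfp⟩ : ∃ p : ℝ, 0 < p ∧ f p < f 0 := by
    by_contra h
    push_neg at h
    have hsub : Set.Ioi (0:ℝ) ⊆ {x | f 0 ≤ f x} := fun x hx => h x hx
    have := lt_of_le_of_lt (measure_mono hsub) hfin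
    rw [Real.volume_Ioi] at this
    exact absurd this (lt_irrefl _)
  -- a point to the left where f is smaller
  obtain ⟨q, hq0, hfq⟩ : ∃ q : ℝ, q < 0 ∧ f q < f 0 := by
    by_contra h
    push_neg at h
    have hsub : Set.Iio (0:ℝ) ⊆ {x | f 0 ≤ f x} := fun x hx => h x hx
    have := lt_of_le_of_lt (measure_mono hsub) hfin
    rw [Real.volume_Iio] at this
    exact absurd this (lt_irrefl _)
  have hgp : g p < g 0 := Real.log_lt_log (hpos p) hfp
  have hgq : g q < g 0 := Real.log_lt_log (hpos q) hfq
  set mp : ℝ := (g p - g 0) / p with hmp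
  set mq : ℝ := (g q - g 0) / q with hmq
  have hmp_neg : mp < 0 := div_neg_of_neg_of_pos (by linarith) hp0
  have hmq_pos : 0 < mq := div_pos_of_neg_of_neg (by linarith) hq0
  have hmp_eq : mp * p = g p - g 0 := div_mul_cancel₀ _ (ne_of_gt hp0)
  have hmq_eq : mq * q = g q - g 0 := div_mul_cancel₀ _ (ne_of_lt hq0)
  -- linear bound on the right
  have hR : ∀ s, p ≤ s → g s ≤ g 0 + mp * s := by
    intro s hs
    rcases eq_or_lt_of_le hs with rfl | hlt
    · linarith
    · have := hconc.slope_anti_adjacent (Set.mem_univ 0) (Set.mem_univ s) hp0 hlt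
      rw [sub_zero] at this
      have h2 : g s - g p ≤ mp * (s - p) :=
        (div_le_iff₀ (by linarith)).mp this
      nlinarith
  -- linear bound on the left
  have hL : ∀ s, s ≤ q → g s ≤ g 0 + mq * s := by
    intro s hs
    rcases eq_or_lt_of_le hs with rfl | hlt
    · linarith
    · have hsl := hconc.slope_anti_adjacent (Set.mem_univ s) (Set.mem_univ 0) hlt hq0
      have hmq2 : mq = (g 0 - g q) / (0 - q) := by
        rw [hmq, zero_sub, ← neg_div_neg_eq]; ring_nf
      have h2 : mq ≤ (g q - g s) / (q - s) := by rw [hmq2]; exact hsl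
      have h3 : mq * (q - s) ≤ g q - g s := (le_div_iff₀ (by linarith)).mp h2
      nlinarith
  -- continuity and max on the middle interval
  have hcont : Continuous g := by
    rw [← continuousOn_univ]
    exact hconc.continuousOn isOpen_univ
  obtain ⟨x₀, hx₀mem, hx₀max⟩ :=
    isCompact_Icc.exists_isMaxOn (Set.nonempty_Icc.mpr (by linarith : q ≤ p))
      hcont.continuousOn
  set a : ℝ := min (-mp) mq with ha
  have hapos : 0 < a := lt_min (by linarith) hmq_pos
  set R : ℝ := max p (-q) with hR'
  set b : ℝ := max (g 0) (g x₀ + a * R) with hb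
  refine ⟨a, hapos, b, fun s => ?_⟩
  have key : g s ≤ -a * |s| + b := by
    rcases le_total s q with hsq | hqs
    · have h1 := hL s hsq
      have habs : |s| = -s := abs_of_nonpos (by linarith)
      have h2 : mq * s ≤ a * s := by
        have haux : a ≤ mq := min_le_right _ _
        have : (mq - a) * s ≤ 0 :=
          mul_nonpos_of_nonneg_of_nonpos (by linarith) (by linarith)
        nlinarith
      have h3 : g 0 ≤ b := le_max_left _ _
      rw [habs]; linarith
    rcases le_total p s with hps | hsp
    · have h1 := hR s hps
      have habs : |s| = s := abs_of_nonneg (by linarith)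
      have h2 : mp * s ≤ -a * s := by
        have haux : a ≤ -mp := min_le_left _ _
        nlinarith
      have h3 : g 0 ≤ b := le_max_left _ _
      rw [habs]; linarith
    · -- middle
      have h1 : g s ≤ g x₀ := hx₀max ⟨hqs, hsp⟩
      have habs : |s| ≤ R := by
        rw [abs_le]
        constructor
        · have : -R ≤ q := by
            have : -q ≤ R := le_max_right _ _
            linarith
          linarith
        · exact le_trans hsp (le_max_left _ _)
      have h3 : g x₀ + a * R ≤ b := le_max_right _ _
      nlinarith
  calc f s = Real.exp (g s) := (Real.exp_log (hpos s)).symm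
    _ ≤ Real.exp (-a * |s| + b) := Real.exp_le_exp.mpr key
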